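/- Let P ⊆ R^q be compact and U ⊆ R^p be compact, let r : P × U → R be continuous. Suppose sequences (π^k) ⊆ P and (u^k) ⊆ U satisfy: u^k maximizes r(π^k, ·) over U, and finite sets U_k ⊆ U satisfy U_{k+1} = U_k ∪ {u^k}. Define r_k = max_{u ∈ U_k} r(π^k, u). Then r(π^k, u^k) ≥ r_k for all k, and for every ε > 0 there exists k with r(π^k, u^k) − r_k < ε. -/
import Mathlib


/-- In the adaptive max-regret loop, the max-regret of the iterate over the full
uncertainty set always dominates the discretized max-regret, and the gap between
the two becomes smaller than any `ε > 0` at some iteration. -/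
theorem max_regret_gap_vanishes {q p : ℕ}
    (P : Set (EuclideanSpace ℝ (Fin q))) (hPc : IsCompact P) (hPne : P.Nonempty)
    (U : Set (EuclideanSpace ℝ (Fin p))) (hUc : IsCompact U) (hUne : U.Nonempty)
    (r : EuclideanSpace ℝ (Fin q) → EuclideanSpace ℝ (Fin p) → ℝ)
    (hr : ContinuousOn (fun x : EuclideanSpace ℝ (Fin q) × EuclideanSpace ℝ (Fin p) =>
      r x.1 x.2) (P ×ˢ U))
    (π : ℕ → EuclideanSpace ℝ (Fin q)) (hπ : ∀ k, π k ∈ P)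
    (u : ℕ → EuclideanSpace ℝ (Fin p)) (hu : ∀ k, u k ∈ U)
    (hmax : ∀ k, ∀ v ∈ U, r (π k) v ≤ r (π k) (u k))
    (D : ℕ → Set (EuclideanSpace ℝ (Fin p)))
    (hD0 : D 0 ⊆ U) (hD0fin : (D 0).Finite) (hD0ne : (D 0).Nonempty)
    (hDsucc : ∀ k, D (k + 1) = D k ∪ {u k})
    (rk : ℕ → ℝ) (hrk : ∀ k, IsGreatest (r (π k) '' D k) (rk k)) :
    (∀ k, rk k ≤ r (π k) (u k)) ∧ ∀ ε > 0, ∃ k, r (π k) (u k) - rk k < ε := by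
  -- D k ⊆ U for all k
  have hDU : ∀ k, D k ⊆ U := by
    intro k
    induction k with
    | zero => exact hD0
    | succ n ih =>
      rw [hDsucc]
      exact Set.union_subset ih (by simpa using hu n)
  -- D is monotone
  have hmono : Monotone D := by
    apply monotone_nat_of_le_succ
    intro n
    rw [hDsucc]
    exact Set.subset_union_left
  have hmemD : ∀ i j : ℕ, i < j → u i ∈ D j := by
    intro i j hij
    have : u i ∈ D (i + 1) := by rw [hDsucc]; exact Set.mem_union_right _ rfl
    exact hmono hij this
  constructor
  · intro k
    obtain ⟨⟨v, hvD, hveq⟩, _⟩ := hrk k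
    rw [← hveq]
    exact hmax k v (hDU k hvD)
  · intro ε hε
    by_contra h
    push_neg at h
    -- uniform continuity on the compact product
    have huc : UniformContinuousOn
        (fun x : EuclideanSpace ℝ (Fin q) × EuclideanSpace ℝ (Fin p) => r x.1 x.2)
        (P ×ˢ U) := (hPc.prod hUc).uniformContinuousOn_of_continuous hr
    rw [Metric.uniformContinuousOn_iff] at huc
    obtain ⟨δ, hδ, hδε⟩ := huc ε hε
    -- convergent subsequence of u
    obtain ⟨x, _, φ, hφ, hconv⟩ := hUc.tendsto_subseq hu
    have htend := Metric.tendsto_atTop.mp hconv (δ / 2) (by linarith)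
    obtain ⟨N, hN⟩ := htend
    set i := φ N
    set j := φ (N + 1)
    have hij : i < j := hφ (Nat.lt_succ_self N)
    have hdist : dist (u j) (u i) < δ := by
      have h1 := hN N le_rfl
      have h2 := hN (N + 1) (Nat.le_succ N)
      calc dist (u j) (u i) ≤ dist (u j) x + dist x (u i) := dist_triangle _ _ _
        _ < δ / 2 + δ / 2 := by rw [dist_comm x (u i)]; exact add_lt_add h2 h1
        _ = δ := by ring
    have hmem : u i ∈ D j := hmemD i j hij
    have hub : r (π j) (u i) ≤ rk j := (hrk j).2 ⟨u i, hmem, rfl⟩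
    have hd : dist ((π j, u j) : _ × _) ((π j, u i) : _ × _) < δ := by
      rw [Prod.dist_eq]
      exact max_lt (by simpa using hδ) hdist
    have hcont := hδε (π j, u j) ⟨hπ j, hu j⟩ (π j, u i) ⟨hπ j, hDU j hmem⟩ hd
    simp only [Real.dist_eq] at hcont
    have habs : r (π j) (u j) - r (π j) (u i) < ε :=
      lt_of_le_of_lt (le_abs_self _) hcont
    have := h j
    linarith
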